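/- Upper hemi-continuity of the effective argmax correspondence: let w₁,…,w_N : S → [0,1] be continuous with Σ_{k=1}^N w_k(s) = 1 for all s ∈ S, and for a tuple R of functions in C(S×A) let Q*_eff(·,·;R) be the unique fixed point of the Bellman optimality operator for R_eff(s,a;R) = Σ_k w_k(s)R_k(s,a), and let A*_eff(s;R) = argmax_{a∈A} Q*_eff(s,a;R). Then for each fixed s ∈ S: A*_eff(s;R) is non-empty and compact for every tuple R, and the correspondence R ↦ A*_eff(s;R) has closed graph: if ‖Rₙ − R₀‖_N → 0, aₙ ∈ A*_eff(s;Rₙ) for all n, and aₙ → a₀ in A, then a₀ ∈ A*_eff(s;R₀). -/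
import Mathlib


open MeasureTheory ProbabilityTheory Filter Topology

/-- Upper hemi-continuity of the effective argmax correspondence:
for each fixed `s`, the set `A*_eff(s;R) = argmax_a Q*_eff(s,a;R)` is non-empty and
compact for every tuple `R`, and the correspondence `R ↦ A*_eff(s;R)` has closed
graph: if `max_k ‖Rₙ_k - R₀_k‖ → 0`, `aₙ ∈ A*_eff(s;Rₙ)` and `aₙ → a₀`, then
`a₀ ∈ A*_eff(s;R₀)`. Here `Qstar R` is the unique Bellman fixed point for the
effective reward of the tuple `R`. -/
theorem effective_argmax_uhc
    {S A : Type*}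
    [MetricSpace S] [CompactSpace S] [MeasurableSpace S] [BorelSpace S]
    [MetricSpace A] [CompactSpace A] [Nonempty A] [MeasurableSpace A] [BorelSpace A]
    (γ : ℝ) (hγ0 : 0 ≤ γ) (hγ1 : γ < 1)
    (P : Kernel (S × A) S) [IsMarkovKernel P]
    (hFeller : ∀ f : C(S, ℝ), Continuous fun p : S × A => ∫ s', f s' ∂(P p))
    (N : ℕ) (hN : 0 < N)
    (w : Fin N → C(S, ℝ))
    (hw01 : ∀ (k : Fin N) (s : S), w k s ∈ Set.Icc (0 : ℝ) 1)
    (hwsum : ∀ s : S, ∑ k, w k s = 1)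
    (Qstar : (Fin N → C(S × A, ℝ)) → C(S × A, ℝ))
    (hQstar : ∀ (R : Fin N → C(S × A, ℝ)) (p : S × A),
      Qstar R p = (∑ k, w k p.1 * R k p) + γ * ∫ s', (⨆ a' : A, Qstar R (s', a')) ∂(P p))
    (s : S) :
    (∀ R : Fin N → C(S × A, ℝ),
      ({a : A | ∀ b : A, Qstar R (s, b) ≤ Qstar R (s, a)}).Nonempty ∧
      IsCompact {a : A | ∀ b : A, Qstar R (s, b) ≤ Qstar R (s, a)}) ∧
    (∀ (R₀ : Fin N → C(S × A, ℝ)) (Rn : ℕ → Fin N → C(S × A, ℝ)) (a : ℕ → A) (a₀ : A),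
      Tendsto (fun n => ⨆ k, ‖Rn n k - R₀ k‖) atTop (𝓝 0) →
      (∀ n, ∀ b : A, Qstar (Rn n) (s, b) ≤ Qstar (Rn n) (s, a n)) →
      Tendsto a atTop (𝓝 a₀) →
      ∀ b : A, Qstar R₀ (s, b) ≤ Qstar R₀ (s, a₀)) := by
  haveI : Nonempty (Fin N) := ⟨⟨0, hN⟩⟩
  have hγ' : (0:ℝ) < 1 - γ := by linarith
  -- continuity of the value function
  have hVcont : ∀ R : Fin N → C(S × A, ℝ),
      Continuous fun s' : S => ⨆ a' : A, Qstar R (s', a') := by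
    intro R
    have h : Continuous fun s' : S => sSup ((fun a' => Qstar R (s', a')) '' Set.univ) := by
      apply isCompact_univ.continuous_sSup
      exact (Qstar R).continuous.comp continuous_id
    simpa [Set.image_univ, iSup] using h
  -- the key contraction estimate
  have key : ∀ R R' : Fin N → C(S × A, ℝ),
      ‖Qstar R - Qstar R'‖ ≤ (⨆ k, ‖R k - R' k‖) / (1 - γ) := by
    intro R R'
    set ε := ⨆ k, ‖R k - R' k‖ with hε
    set D := ‖Qstar R - Qstar R'‖ with hD
    have hε0 : 0 ≤ ε := Real.iSup_nonneg fun k => norm_nonneg _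
    have hD0 : 0 ≤ D := norm_nonneg _
    have hεk : ∀ k, ‖R k - R' k‖ ≤ ε := fun k =>
      le_ciSup (f := fun k => ‖R k - R' k‖) (Set.Finite.bddAbove (Set.finite_range _)) k
    -- pointwise bound on the sup difference
    have hsup : ∀ s' : S,
        |(⨆ a' : A, Qstar R (s', a')) - (⨆ a' : A, Qstar R' (s', a'))| ≤ D := by
      intro s'
      have hbddR : BddAbove (Set.range fun a' : A => Qstar R (s', a')) := by
        have := (isCompact_univ.image
          ((Qstar R).continuous.comp (Continuous.prodMk_right s'))).bddAbove
        simpa [Set.image_univ] using this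
      have hbddR' : BddAbove (Set.range fun a' : A => Qstar R' (s', a')) := by
        have := (isCompact_univ.image
          ((Qstar R').continuous.comp (Continuous.prodMk_right s'))).bddAbove
        simpa [Set.image_univ] using this
      have hpt : ∀ a' : A, |Qstar R (s', a') - Qstar R' (s', a')| ≤ D := by
        intro a'
        have := (Qstar R - Qstar R').norm_coe_le_norm (s', a')
        simpa [Real.norm_eq_abs] using this
      rw [abs_sub_le_iff]
      constructor
      · rw [sub_le_iff_le_add]
        apply ciSup_le
        intro a'
        have h1 := (abs_le.mp (hpt a')).2
        have h2 : Qstar R' (s', a') ≤ ⨆ a'' : A, Qstar R' (s', a'') := le_ciSup hbddR' a'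
        linarith
      · rw [sub_le_iff_le_add]
        apply ciSup_le
        intro a'
        have h1 := (abs_le.mp (hpt a')).1
        have h2 : Qstar R (s', a') ≤ ⨆ a'' : A, Qstar R (s', a'') := le_ciSup hbddR a'
        linarith
    -- pointwise bound on the fixed point difference
    have hpt : ∀ p : S × A, ‖(Qstar R - Qstar R') p‖ ≤ ε + γ * D := by
      intro p
      have hint : ∀ R'' : Fin N → C(S × A, ℝ),
          Integrable (fun s' => ⨆ a' : A, Qstar R'' (s', a')) (P p) := by
        intro R''
        apply (hVcont R'').integrable_of_hasCompactSupport
        exact HasCompactSupport.of_compactSpace _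
      set IR := ∫ s', (⨆ a' : A, Qstar R (s', a')) ∂(P p) with hIR
      set IR' := ∫ s', (⨆ a' : A, Qstar R' (s', a')) ∂(P p) with hIR'
      have hIbound : |IR - IR'| ≤ D := by
        rw [hIR, hIR', ← integral_sub (hint R) (hint R')]
        have := norm_integral_le_of_norm_le_const
          (μ := P p)
          (f := fun s' => (⨆ a' : A, Qstar R (s', a')) - (⨆ a' : A, Qstar R' (s', a')))
          (C := D) (Filter.Eventually.of_forall fun s' => by
            simpa [Real.norm_eq_abs] using hsup s')
        simpa [Real.norm_eq_abs, measure_univ] using this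
      have hwbound : |∑ k, w k p.1 * ((R k - R' k) p)| ≤ ε := by
        calc |∑ k, w k p.1 * ((R k - R' k) p)|
            ≤ ∑ k, |w k p.1 * ((R k - R' k) p)| := Finset.abs_sum_le_sum_abs _ _
          _ = ∑ k, w k p.1 * |(R k - R' k) p| := by
              refine Finset.sum_congr rfl fun k _ => ?_
              rw [abs_mul, abs_of_nonneg (hw01 k p.1).1]
          _ ≤ ∑ k, w k p.1 * ε := by
              refine Finset.sum_le_sum fun k _ => ?_
              refine mul_le_mul_of_nonneg_left ?_ (hw01 k p.1).1
              have := (R k - R' k).norm_coe_le_norm p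
              have h2 := hεk k
              simp only [Real.norm_eq_abs] at this
              linarith
          _ = ε := by rw [← Finset.sum_mul, hwsum, one_mul]
      have heq : (Qstar R - Qstar R') p
          = (∑ k, w k p.1 * ((R k - R' k) p)) + γ * (IR - IR') := by
        simp only [ContinuousMap.sub_apply]
        rw [hQstar R p, hQstar R' p]
        simp only [ContinuousMap.sub_apply, mul_sub, Finset.sum_sub_distrib]
        ring
      rw [Real.norm_eq_abs, heq]
      calc |(∑ k, w k p.1 * ((R k - R' k) p)) + γ * (IR - IR')|
          ≤ |∑ k, w k p.1 * ((R k - R' k) p)| + |γ * (IR - IR')| := abs_add_le _ _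
        _ ≤ ε + γ * D := by
            rw [abs_mul, abs_of_nonneg hγ0]
            have := mul_le_mul_of_nonneg_left hIbound hγ0
            linarith
    have hnorm : D ≤ ε + γ * D := by
      rw [hD]
      exact (ContinuousMap.norm_le _ (by positivity)).mpr hpt
    rw [le_div_iff₀ hγ']
    nlinarith
  constructor
  · intro R
    have hf : Continuous fun a' : A => Qstar R (s, a') :=
      (Qstar R).continuous.comp (Continuous.prodMk_right s)
    constructor
    · obtain ⟨a, -, ha⟩ := isCompact_univ.exists_isMaxOn Set.univ_nonempty hf.continuousOn
      exact ⟨a, fun b => ha (Set.mem_univ b)⟩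
    · apply IsClosed.isCompact
      have : {a : A | ∀ b : A, Qstar R (s, b) ≤ Qstar R (s, a)}
          = ⋂ b : A, {a : A | Qstar R (s, b) ≤ Qstar R (s, a)} := by
        ext a; simp [Set.mem_iInter]
      rw [this]
      exact isClosed_iInter fun b => isClosed_le continuous_const hf
  · intro R₀ Rn a a₀ hR ha hconv b
    set D : ℕ → ℝ := fun n => ‖Qstar (Rn n) - Qstar R₀‖ with hDdef
    have hDto : Tendsto D atTop (𝓝 0) := by
      have h1 : Tendsto (fun n => (⨆ k, ‖Rn n k - R₀ k‖) / (1 - γ)) atTop (𝓝 0) := by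
        simpa using hR.div_const (1 - γ)
      exact squeeze_zero (fun n => norm_nonneg _) (fun n => key (Rn n) R₀) h1
    have hchain : ∀ n, Qstar R₀ (s, b) ≤ Qstar R₀ (s, a n) + 2 * D n := by
      intro n
      have h1 : |Qstar (Rn n) (s, b) - Qstar R₀ (s, b)| ≤ D n := by
        have := (Qstar (Rn n) - Qstar R₀).norm_coe_le_norm (s, b)
        simpa [Real.norm_eq_abs] using this
      have h2 : |Qstar (Rn n) (s, a n) - Qstar R₀ (s, a n)| ≤ D n := by
        have := (Qstar (Rn n) - Qstar R₀).norm_coe_le_norm (s, a n)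
        simpa [Real.norm_eq_abs] using this
      have h3 := ha n b
      have h1' := abs_le.mp h1
      have h2' := abs_le.mp h2
      linarith [h1'.1, h1'.2, h2'.1, h2'.2]
    have hlim : Tendsto (fun n => Qstar R₀ (s, a n) + 2 * D n) atTop
        (𝓝 (Qstar R₀ (s, a₀))) := by
      have hq : Tendsto (fun n => Qstar R₀ (s, a n)) atTop (𝓝 (Qstar R₀ (s, a₀))) :=
        (((Qstar R₀).continuous.comp (Continuous.prodMk_right s)).tendsto a₀).comp hconv
      have h2D : Tendsto (fun n => 2 * D n) atTop (𝓝 0) := by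
        simpa using hDto.const_mul 2
      simpa using hq.add h2D
    exact ge_of_tendsto' hlim hchain
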